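/- Let G be a locally compact Abelian group and μ, ν ∈ M(G) with μ ∗ ν = 0, μ + ν of natural spectrum, and such that the set σ(ν) ∩ μ̂(Δ(M(G)) \ Ĝ) is finite. Then μ has natural spectrum. -/
import Mathlib


open WeakDual

/-- A measure `μ` in the measure algebra `M(G)` (modelled as a commutative complex Banach
algebra `A`, with the dual group `Ĝ` given as a subset `Ghat` of the Gelfand space
`Δ(M(G)) = characterSpace ℂ A`) has *natural spectrum* if its spectrum equals the closure of
the range of its Fourier–Stieltjes transform. -/
def HasNaturalSpectrum {A : Type*} [NormedCommRing A] [NormedAlgebra ℂ A]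
    (Ghat : Set (characterSpace ℂ A)) (μ : A) : Prop :=
  spectrum ℂ μ = closure ((fun φ : characterSpace ℂ A => φ μ) '' Ghat)

section Aux
open Metric Set Real in
private 
lemma keyRiesz {A : Type*} [NormedCommRing A] [NormedAlgebra ℂ A] [CompleteSpace A]
    (Ghat : Set (characterSpace ℂ A))
    (huniq : ∀ x : A, (∀ φ ∈ Ghat, φ x = 0) → x = 0)
    (μ : A) (φ : characterSpace ℂ A) {c : ℂ} {r : ℝ} (hr : 0 < r)
    (hφ : φ μ ∈ Metric.ball c r)
    (hres : ∀ z ∈ Metric.sphere c r, IsUnit (algebraMap ℂ A z - μ))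
    (hG : ∀ ψ ∈ Ghat, ψ μ ∉ Metric.closedBall c r) : False := by
  have hcont : ContinuousOn (resolvent μ) (Metric.sphere c r) := by
    intro z hz
    exact ((spectrum.hasDerivAt_resolvent (hres z hz)).continuousAt).continuousWithinAt
  have hint : CircleIntegrable (resolvent μ) c r := hcont.circleIntegrable hr.le
  set e : A := ∮ z in C(c, r), resolvent μ z with he
  have key2 : ∀ ψ : characterSpace ℂ A, ψ e = ∮ z in C(c, r), (z - ψ μ)⁻¹ := by
    intro ψ
    have hψres : ∀ z ∈ Metric.sphere c r, ψ (resolvent μ z) = (z - ψ μ)⁻¹ := by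
      intro z hz
      have h1 : resolvent μ z * (algebraMap ℂ A z - μ) = 1 :=
        Ring.inverse_mul_cancel _ (hres z hz)
      have h2 : ψ (resolvent μ z) * (z - ψ μ) = 1 := by
        have := congrArg ψ h1
        rwa [map_mul, map_sub, map_one, AlgHomClass.commutes] at this
      exact eq_inv_of_mul_eq_one_left h2
    have hL : (ψ.1 : A →L[ℂ] ℂ) e
        = ∫ θ in (0:ℝ)..2 * π, (ψ.1 : A →L[ℂ] ℂ)
            (deriv (circleMap c r) θ • resolvent μ (circleMap c r θ)) := by
      rw [he, circleIntegral]
      exact ((ψ.1 : A →L[ℂ] ℂ).intervalIntegral_comp_comm hint.out).symm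
    have : ψ e = ∫ θ in (0:ℝ)..2 * π,
        deriv (circleMap c r) θ • (circleMap c r θ - ψ μ)⁻¹ := by
      rw [show ψ e = (ψ.1 : A →L[ℂ] ℂ) e from rfl, hL]
      refine intervalIntegral.integral_congr fun θ _ => ?_
      rw [map_smul]
      congr 1
      exact hψres _ (circleMap_mem_sphere c hr.le θ)
    rw [this, circleIntegral]
  have hφe : φ e = 2 * π * Complex.I := by
    rw [key2 φ]
    exact circleIntegral.integral_sub_inv_of_mem_ball hφ
  have hze : e = 0 := by
    refine huniq e fun ψ hψ => ?_
    rw [key2 ψ]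
    refine Complex.circleIntegral_eq_zero_of_differentiable_on_off_countable hr.le
      (s := ∅) Set.countable_empty ?_ ?_
    · refine ContinuousOn.inv₀ (by fun_prop) fun z hz => ?_
      exact sub_ne_zero.2 fun h => hG ψ hψ (h ▸ hz)
    · intro z hz
      refine DifferentiableAt.inv (by fun_prop) ?_
      exact sub_ne_zero.2 fun h => hG ψ hψ (h ▸ Metric.ball_subset_closedBall hz.1)
  rw [hze, map_zero] at hφe
  exact Complex.two_pi_I_ne_zero hφe.symm


open Metric Set Real in

private theorem mainAux
    {A : Type*} [NormedCommRing A] [NormedAlgebra ℂ A] [CompleteSpace A]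
    (Ghat : Set (characterSpace ℂ A))
    (huniq : ∀ x : A, (∀ φ ∈ Ghat, φ x = 0) → x = 0)
    (μ ν : A) (hmul : μ * ν = 0)
    (hnat : spectrum ℂ (μ + ν) = closure ((fun φ : characterSpace ℂ A => φ (μ + ν)) '' Ghat))
    (hfin : (spectrum ℂ ν ∩ ((fun φ : characterSpace ℂ A => φ μ) '' Ghatᶜ)).Finite)
    :
    spectrum ℂ μ = closure ((fun φ : characterSpace ℂ A => φ μ) '' Ghat) := by
  set T := closure ((fun φ : characterSpace ℂ A => φ μ) '' Ghat) with hT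
  have hTsub : T ⊆ spectrum ℂ μ := by
    refine closure_minimal ?_ (spectrum.isClosed μ)
    rintro - ⟨ψ, -, rfl⟩
    exact CharacterSpace.apply_mem_spectrum ψ μ
  -- the exceptional set is contained in the finite set
  have hSsub : spectrum ℂ μ \ T ⊆
      spectrum ℂ ν ∩ ((fun φ : characterSpace ℂ A => φ μ) '' Ghatᶜ) := by
    rintro l ⟨hl, hlT⟩
    obtain ⟨φ, hφl⟩ := WeakDual.CharacterSpace.mem_spectrum_iff_exists.1 hl
    have hφG : φ ∉ Ghat := fun h => hlT (subset_closure ⟨φ, h, hφl⟩)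
    have hmφ : φ μ * φ ν = 0 := by rw [← map_mul, hmul, map_zero]
    have hφμ : φ μ ≠ 0 := by
      intro h0
      by_cases hν : ν = 0
      · rw [hν, add_zero] at hnat
        exact hlT (by rw [hT, ← hnat]; exact hl)
      · have : ¬∀ ψ ∈ Ghat, ψ ν = 0 := fun h => hν (huniq ν h)
        push_neg at this
        obtain ⟨ψ, hψG, hψν⟩ := this
        have hψμ : ψ μ = 0 := by
          have : ψ μ * ψ ν = 0 := by rw [← map_mul, hmul, map_zero]
          exact (mul_eq_zero.1 this).resolve_right hψν
        exact hlT (by rw [← hφl, h0, ← hψμ]; exact subset_closure ⟨ψ, hψG, rfl⟩)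
    have hφν : φ ν = 0 := (mul_eq_zero.1 hmφ).resolve_left hφμ
    have hlσ : l ∈ spectrum ℂ (μ + ν) := by
      rw [← hφl, ← show φ (μ + ν) = φ μ by rw [map_add, hφν, add_zero]]
      exact CharacterSpace.apply_mem_spectrum φ _
    rw [hnat] at hlσ
    have hims : (fun ψ : characterSpace ℂ A => ψ (μ + ν)) '' Ghat ⊆
        ((fun ψ : characterSpace ℂ A => ψ μ) '' Ghat) ∪
        ((fun ψ : characterSpace ℂ A => ψ ν) '' Ghat) := by
      rintro - ⟨ψ, hψ, rfl⟩
      have : ψ μ * ψ ν = 0 := by rw [← map_mul, hmul, map_zero]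
      rcases mul_eq_zero.1 this with h | h
      · exact Or.inr ⟨ψ, hψ, by simp [map_add, h]⟩
      · exact Or.inl ⟨ψ, hψ, by simp [map_add, h]⟩
    have hl2 : l ∈ T ∪ closure ((fun ψ : characterSpace ℂ A => ψ ν) '' Ghat) := by
      rw [← closure_union]
      exact closure_mono hims hlσ
    have hlν : l ∈ closure ((fun ψ : characterSpace ℂ A => ψ ν) '' Ghat) :=
      hl2.resolve_left hlT
    refine ⟨?_, ⟨φ, hφG, hφl⟩⟩
    refine closure_minimal ?_ (spectrum.isClosed ν) hlν
    rintro - ⟨ψ, -, rfl⟩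
    exact CharacterSpace.apply_mem_spectrum ψ ν
  have hSfin : (spectrum ℂ μ \ T).Finite := hfin.subset hSsub
  refine Set.Subset.antisymm ?_ hTsub
  intro z hz
  by_contra hzT
  have hzS : z ∈ spectrum ℂ μ \ T := ⟨hz, hzT⟩
  -- z is isolated in the spectrum
  have hclosed : IsClosed (spectrum ℂ μ \ {z}) := by
    have heq : spectrum ℂ μ \ {z} = (spectrum ℂ μ ∩ T) ∪ ((spectrum ℂ μ \ T) \ {z}) := by
      ext w
      constructor
      · rintro ⟨hw, hwz⟩
        by_cases hwT : w ∈ T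
        · exact Or.inl ⟨hw, hwT⟩
        · exact Or.inr ⟨⟨hw, hwT⟩, hwz⟩
      · rintro (⟨hw, hwT⟩ | ⟨⟨hw, hwT⟩, hwz⟩)
        · exact ⟨hw, fun h => hzT (h ▸ hwT)⟩
        · exact ⟨hw, hwz⟩
    rw [heq]
    exact ((spectrum.isClosed μ).inter isClosed_closure).union
      ((hSfin.subset diff_subset).isClosed)
  obtain ⟨φ, hφz⟩ := WeakDual.CharacterSpace.mem_spectrum_iff_exists.1 hz
  obtain ⟨r₀, hr₀, hball₀⟩ := Metric.isOpen_iff.1 hclosed.isOpen_compl z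
    (fun h => h.2 rfl)
  obtain ⟨r₁, hr₁, hball₁⟩ := Metric.isOpen_iff.1 isClosed_closure.isOpen_compl z hzT
  set r := min r₀ r₁ / 2 with hrdef
  have hr : 0 < r := by positivity
  have hrr₀ : r < r₀ := by
    calc r < min r₀ r₁ := by simpa using half_lt_self (lt_min hr₀ hr₁)
    _ ≤ r₀ := min_le_left _ _
  have hrr₁ : r < r₁ := by
    calc r < min r₀ r₁ := by simpa using half_lt_self (lt_min hr₀ hr₁)
    _ ≤ r₁ := min_le_right _ _
  refine keyRiesz Ghat huniq μ φ hr (by rw [hφz]; exact Metric.mem_ball_self hr) ?_ ?_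
  · intro w hw
    have hwz : w ≠ z := by
      intro h; rw [h] at hw
      simp [Metric.mem_sphere, hr.ne'] at hw
      exact hr.ne' hw.symm
    have hwσ : w ∉ spectrum ℂ μ := by
      intro hwσ
      have : w ∈ (spectrum ℂ μ \ {z})ᶜ := hball₀ (by
        rw [Metric.mem_ball]
        calc dist w z = r := hw
        _ < r₀ := hrr₀)
      exact this ⟨hwσ, hwz⟩
    rw [spectrum.notMem_iff] at hwσ
    exact hwσ
  · intro ψ hψ hmem
    have : ψ μ ∈ Tᶜ := hball₁ (by
      rw [Metric.mem_ball]
      calc dist (ψ μ) z ≤ r := hmem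
      _ < r₁ := hrr₁)
    exact this (subset_closure ⟨ψ, hψ, rfl⟩)

end Aux

/-- Let `G` be a locally compact Abelian group and `μ, ν ∈ M(G)` with
`μ ∗ ν = 0`, `μ + ν` of natural spectrum, and such that the set
`σ(ν) ∩ μ̂(Δ(M(G)) \ Ĝ)` is finite. Then `μ` has natural spectrum.

The uniqueness theorem for Fourier–Stieltjes transforms is supplied as the hypothesis
`huniq`. -/
theorem hasNaturalSpectrum_of_mul_eq_zero_of_finite
    {A : Type*} [NormedCommRing A] [NormedAlgebra ℂ A] [CompleteSpace A]
    (Ghat : Set (characterSpace ℂ A))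
    (huniq : ∀ x : A, (∀ φ ∈ Ghat, φ x = 0) → x = 0)
    (μ ν : A) (hmul : μ * ν = 0)
    (hnat : HasNaturalSpectrum Ghat (μ + ν))
    (hfin : (spectrum ℂ ν ∩ ((fun φ : characterSpace ℂ A => φ μ) '' Ghatᶜ)).Finite) :
    HasNaturalSpectrum Ghat μ := by
  unfold HasNaturalSpectrum at hnat ⊢
  exact mainAux Ghat huniq μ ν hmul hnat hfin
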